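/- arXiv:1004.2193 — 4 statements merged into one kernel-verified Lean document; each statement's English description precedes it below -/
import Mathlib

section
/- In ℚ[X]: f_{-8}^{C_6}(X) = f_{-1}^{C_3}(X)·f_{-15}^{C_3}(X), f_{-3}^{C_6}(X) = f_0^{C_3}(X)·f_{-6}^{C_3}(X), f_0^{C_6}(X) = f_3^{C_3}(X)·f_{-3}^{C_3}(X), and f_5^{C_6}(X) = f_{12}^{C_3}(X)·f_{-2}^{C_3}(X). -/
open Polynomial

noncomputable def fC6 (m : ℚ) : ℚ[X] :=
  X^6 - C (2*m)*X^5 - C (5*(m+3))*X^4 - C 20*X^3 + C (5*m)*X^2 + C (2*(m+3))*X + 1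

noncomputable def fC3 (m : ℚ) : ℚ[X] := X^3 - C m*X^2 - C (m+3)*X - 1

theorem stmt7 :
    fC6 (-8) = fC3 (-1) * fC3 (-15) ∧ fC6 (-3) = fC3 0 * fC3 (-6) ∧
    fC6 0 = fC3 3 * fC3 (-3) ∧ fC6 5 = fC3 12 * fC3 (-2) := by
  refine ⟨?_, ?_, ?_, ?_⟩ <;> · unfold fC6 fC3; norm_num [map_ofNat]; ring
end

section
/- Let K be a field of characteristic not 2 or 3 and let z ∈ K with z(z+1)(z-1)(z+2)(2z+1) ≠ 0. Set s = (z^6 - 15z^4 - 20z^3 + 6z + 1)/(z(2z^4 + 5z^3 - 5z - 2)). Then z is a root of f_s^{C_6}(X) = X^6 - 2sX^5 - 5(s+3)X^4 - 20X^3 + 5sX^2 + 2(s+3)X + 1. -/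
theorem stmt9 (K : Type*) [Field K] (h2 : (2 : K) ≠ 0) (h3 : (3 : K) ≠ 0)
    (z : K) (hz : z*(z+1)*(z-1)*(z+2)*(2*z+1) ≠ 0)
    (s : K) (hs : s = (z^6 - 15*z^4 - 20*z^3 + 6*z + 1) / (z*(2*z^4 + 5*z^3 - 5*z - 2))) :
    z^6 - 2*s*z^5 - 5*(s+3)*z^4 - 20*z^3 + 5*s*z^2 + 2*(s+3)*z + 1 = 0 := by
  have hd : z*(2*z^4 + 5*z^3 - 5*z - 2) ≠ 0 := by
    intro h
    apply hz
    linear_combination h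
  subst hs
  have h := mul_inv_cancel₀ hd
  linear_combination (-(z^6 - 15*z^4 - 20*z^3 + 6*z + 1)) * h
end

section
/- Let K be a field of characteristic not 2 or 3, and let z_3 ∈ K satisfy the simplest cubic equation z_3^3 - s·z_3^2 - (s+3)·z_3 - 1 = 0 for some s ∈ K, with z_3 ≠ 0 and z_3 ≠ -1. Then -1/(z_3+1) and -(z_3+1)/z_3 are also roots of X^3 - sX^2 - (s+3)X - 1. -/
theorem stmt12 (K : Type*) [Field K] (h2 : (2 : K) ≠ 0) (h3 : (3 : K) ≠ 0)
    (s z₃ : K) (h0 : z₃ ≠ 0) (h1 : z₃ ≠ -1)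
    (hroot : z₃^3 - s*z₃^2 - (s+3)*z₃ - 1 = 0) :
    ((-1/(z₃+1))^3 - s*(-1/(z₃+1))^2 - (s+3)*(-1/(z₃+1)) - 1 = 0) ∧
    ((-(z₃+1)/z₃)^3 - s*(-(z₃+1)/z₃)^2 - (s+3)*(-(z₃+1)/z₃) - 1 = 0) := by
  have hz1 : z₃ + 1 ≠ 0 := fun h => h1 (by linear_combination h)
  refine ⟨?_, ?_⟩ <;> field_simp
  · linear_combination (-1) * hroot
  · linear_combination hroot
end

section
/- For all integers m, x, y with x ≢ y (mod 3), F_m(x,y) ≡ 1 (mod 3), where F_m(X,Y) = X^6 - 2mX^5Y - 5(m+3)X^4Y^2 - 20X^3Y^3 + 5mX^2Y^4 + 2(m+3)XY^5 + Y^6. -/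
def F (m x y : ℤ) : ℤ :=
  x^6 - 2*m*x^5*y - 5*(m+3)*x^4*y^2 - 20*x^3*y^3 + 5*m*x^2*y^4 + 2*(m+3)*x*y^5 + y^6

theorem stmt18 (m x y : ℤ) (h : ¬ x ≡ y [ZMOD 3]) : F m x y ≡ 1 [ZMOD 3] := by
  have h3 : ((3:ℕ):ℤ) = 3 := by norm_num
  rw [← h3] at h ⊢
  rw [← ZMod.intCast_eq_intCast_iff] at *
  unfold F
  push_cast
  revert h
  generalize (m : ZMod 3) = a
  generalize (x : ZMod 3) = b
  generalize (y : ZMod 3) = c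
  revert a b c
  decide
end
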